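/- Fix d ≥ 1 and m ∈ ℕ. Let v : Fin d → MvPolynomial (Fin d) ℝ be a vector field with polynomial components in d variables over ℝ such that for all indices i, j one has pderiv i (v j) = pderiv j (v i) (symmetry of the formal Jacobian, i.e., the curl-free condition), and suppose each component v i has total degree at most m. Then there exists a polynomial f in d variables over ℝ with total degree at most m+1 such that pderiv i f = v i for every i. -/

import Mathlib

open MvPolynomial Finsupp

lemma coeff_pderiv {d : ℕ} (j : Fin d) (ν : Fin d →₀ ℕ) (q : MvPolynomial (Fin d) ℝ) :
    coeff ν (pderiv j q) = ((ν j : ℝ) + 1) * coeff (ν + Finsupp.single j 1) q := by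
  induction q using MvPolynomial.induction_on' with
  | add p q hp hq => simp [map_add, coeff_add, hp, hq]; ring
  | monomial s a =>
    rw [pderiv_monomial]
    simp only [coeff_monomial]
    by_cases hs : s j = 0
    · have h1 : s - Finsupp.single j 1 = s := by
        ext k; simp [Finsupp.tsub_apply, Finsupp.single_apply]
        rcases eq_or_ne j k with rfl | h <;> simp [*]
      have h2 : s ≠ ν + Finsupp.single j 1 := by
        intro h; apply absurd hs; rw [h]; simp
      simp [h1, h2, hs]
    · have h1 : s - Finsupp.single j 1 = ν ↔ s = ν + Finsupp.single j 1 := by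
        constructor
        · intro h; ext k
          have := congrArg (fun f => f k) h
          simp [Finsupp.tsub_apply, Finsupp.single_apply] at this ⊢
          rcases eq_or_ne j k with rfl | hne <;> simp_all <;> omega
        · intro h; rw [h]; ext k
          simp [Finsupp.tsub_apply, Finsupp.single_apply]
      by_cases h : s = ν + Finsupp.single j 1
      · have hsj : s j = ν j + 1 := by rw [h]; simp
        simp [h1.mpr h, h, hsj]; ring
      · simp [h, (not_iff_not.mpr h1).mpr h]

/-- Polynomial version of `H(curl⁰; K) = ∇H¹(K)` in dimension `d`:
a polynomial vector field `v` with symmetric formal Jacobian (curl-free)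
whose components have total degree at most `m` is the formal gradient of
a polynomial of total degree at most `m + 1`. -/
theorem exists_potential_of_curlFree (d m : ℕ) (hd : 1 ≤ d)
    (v : Fin d → MvPolynomial (Fin d) ℝ)
    (hcurl : ∀ i j : Fin d, pderiv i (v j) = pderiv j (v i))
    (hdeg : ∀ i : Fin d, (v i).totalDegree ≤ m) :
    ∃ f : MvPolynomial (Fin d) ℝ, f.totalDegree ≤ m + 1 ∧
      ∀ i : Fin d, pderiv i f = v i := by
  classical
  set p : MvPolynomial (Fin d) ℝ := ∑ i : Fin d, X i * v i with hp
  set D : (Fin d →₀ ℕ) → ℕ := fun μ => ∑ i : Fin d, μ i with hD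
  set f : MvPolynomial (Fin d) ℝ :=
    ∑ μ ∈ p.support, monomial μ (coeff μ p / (D μ : ℝ)) with hf
  -- degree of p
  have hpdeg : p.totalDegree ≤ m + 1 := by
    refine le_trans (totalDegree_finset_sum _ _) (Finset.sup_le fun i _ => ?_)
    calc (X i * v i).totalDegree ≤ (X (R := ℝ) i).totalDegree + (v i).totalDegree :=
          totalDegree_mul _ _
      _ ≤ 1 + m := by
          have := hdeg i
          have hx : (X (R := ℝ) (σ := Fin d) i).totalDegree ≤ 1 := by
            simp [totalDegree_X]
          omega
      _ = m + 1 := by omega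
  -- coefficient of f
  have hcf : ∀ μ, coeff μ f = coeff μ p / (D μ : ℝ) := by
    intro μ
    rw [hf, coeff_sum]
    simp only [coeff_monomial]
    rw [Finset.sum_ite_eq' p.support μ]
    by_cases hμ : μ ∈ p.support
    · simp [hμ]
    · simp only [hμ, if_false]
      rw [MvPolynomial.notMem_support_iff.mp hμ, zero_div]
  -- degree bound
  have hfdeg : f.totalDegree ≤ m + 1 := by
    refine le_trans (totalDegree_finset_sum _ _) (Finset.sup_le fun μ hμ => ?_)
    refine le_trans (totalDegree_monomial_le _ _) ?_
    exact le_trans (le_trans (le_of_eq rfl) (le_totalDegree hμ)) hpdeg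
  refine ⟨f, hfdeg, fun j => ?_⟩
  -- show pderiv j f = v j coefficientwise
  ext ν
  rw [_root_.coeff_pderiv]
  set μ : Fin d →₀ ℕ := ν + Finsupp.single j 1 with hμ
  have hμj : μ j = ν j + 1 := by simp [hμ]
  have hDμ : D μ = D ν + 1 := by
    simp only [hD, hμ, Finsupp.add_apply, Finsupp.single_apply, Finset.sum_add_distrib]
    simp
  have hDμ0 : (D μ : ℝ) ≠ 0 := by
    rw [hDμ]; exact Nat.cast_ne_zero.mpr (Nat.succ_ne_zero _)
  rw [hcf]
  -- key identity: (ν j + 1) * coeff μ p = D μ * coeff ν (v j)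
  have key : ((ν j : ℝ) + 1) * coeff μ p = (D μ : ℝ) * coeff ν (v j) := by
    rw [hp, coeff_sum, Finset.mul_sum, hD]
    push_cast
    rw [Finset.sum_mul]
    refine Finset.sum_congr rfl fun i _ => ?_
    rw [coeff_X_mul']
    by_cases hi : i ∈ μ.support
    · rcases eq_or_ne i j with rfl | hij
      · have : μ - Finsupp.single i 1 = ν := by
          rw [hμ]; exact add_tsub_cancel_right _ _
        rw [if_pos hi, this, hμj]
        push_cast; ring
      · have hνi : 0 < ν i := by
          have : μ i ≠ 0 := Finsupp.mem_support_iff.mp hi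
          simpa [hμ, Finsupp.single_apply, hij.symm] using Nat.pos_of_ne_zero this
        have hμi : μ i = ν i := by simp [hμ, Finsupp.single_apply, hij.symm]
        -- use curl at ρ = ν - single i 1
        set ρ : Fin d →₀ ℕ := ν - Finsupp.single i 1 with hρ
        have hρi : ρ i = ν i - 1 := by simp [hρ, Finsupp.tsub_apply]
        have hρj : ρ j = ν j := by
          simp [hρ, Finsupp.tsub_apply, Finsupp.single_apply, hij]
        have hρ1 : ρ + Finsupp.single i 1 = ν := by
          refine Finsupp.ext fun k => ?_
          simp only [Finsupp.add_apply, hρ, Finsupp.tsub_apply, Finsupp.single_apply]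
          rcases eq_or_ne i k with rfl | h
          · simp; omega
          · simp [h]
        have hρ2 : ρ + Finsupp.single j 1 = μ - Finsupp.single i 1 := by
          refine Finsupp.ext fun k => ?_
          simp only [Finsupp.add_apply, hρ, hμ, Finsupp.tsub_apply, Finsupp.single_apply]
          rcases eq_or_ne i k with rfl | h
          · simp only [if_pos rfl, if_neg (Ne.symm hij)]; omega
          · simp [h]
        have hc := congrArg (coeff ρ) (hcurl i j)
        rw [_root_.coeff_pderiv, _root_.coeff_pderiv, hρ1, hρ2, hρi, hρj] at hc
        have hcast : ((ν i - 1 : ℕ) : ℝ) + 1 = (ν i : ℝ) := by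
          exact_mod_cast congrArg (Nat.cast (R := ℝ)) (Nat.succ_pred_eq_of_pos hνi)
        rw [hcast] at hc
        rw [if_pos hi, hμi, ← hc]
    · have hμi : μ i = 0 := Finsupp.notMem_support_iff.mp hi
      rw [if_neg hi, hμi]
      push_cast; ring
  rw [mul_div_assoc', div_eq_iff hDμ0, key]
  ring
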